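/- Let G_S be a self-loop graph of order n and size m with σ loops. Then 𝓔(G_S) ≤ √(n(2m + σ − σ²/n)). Moreover, if equality holds then G_S is (a,b)-semi-regular with a = 2m/n + 3σ/n − 2σ²/n² − 1 (degrees of loop vertices) and b = 2m/n + σ/n − 2σ²/n² (degrees of non-loop vertices). -/

import Mathlib

open Matrix Finset

/-- The diagonal 0-1 matrix indicating the loop vertices in `S`. -/
def loopMat (n : ℕ) (S : Finset (Fin n)) : Matrix (Fin n) (Fin n) ℝ :=
  Matrix.of fun i j => if i = j ∧ i ∈ S then 1 else 0

lemma aux_trace_eq_sum_eig {n : ℕ} (A : Matrix (Fin n) (Fin n) ℝ) (hA : A.IsHermitian) :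
    A.trace = ∑ i, hA.eigenvalues i := by
  have h1 : star (hA.eigenvectorUnitary : Matrix (Fin n) (Fin n) ℝ) * hA.eigenvectorUnitary = 1 :=
    (Matrix.mem_unitaryGroup_iff').mp (hA.eigenvectorUnitary).2
  conv_lhs => rw [hA.spectral_theorem, Unitary.conjStarAlgAut_apply]
  rw [Matrix.trace_mul_comm, ← mul_assoc, h1, one_mul]
  simp [Matrix.trace_diagonal]

lemma aux_trace_sq_eq {n : ℕ} (A : Matrix (Fin n) (Fin n) ℝ) (hA : A.IsHermitian) :
    (A*A).trace = ∑ i, (hA.eigenvalues i)^2 := by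
  set U : Matrix (Fin n) (Fin n) ℝ := (hA.eigenvectorUnitary : Matrix (Fin n) (Fin n) ℝ) with hU
  set D : Matrix (Fin n) (Fin n) ℝ := Matrix.diagonal (RCLike.ofReal ∘ hA.eigenvalues) with hD
  have h1 : star U * U = 1 := (Matrix.mem_unitaryGroup_iff').mp (hA.eigenvectorUnitary).2
  have key : A * A = U * (D * D) * star U := by
    conv_lhs => rw [hA.spectral_theorem, Unitary.conjStarAlgAut_apply]
    simp only [← hU, ← hD, mul_assoc]
    rw [← mul_assoc (star U) U, h1, one_mul]
  rw [key, Matrix.trace_mul_comm, ← mul_assoc, h1, one_mul, hD, Matrix.diagonal_mul_diagonal]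
  simp [Matrix.trace_diagonal, sq]

lemma aux_shifted_sq {n : ℕ} (A : Matrix (Fin n) (Fin n) ℝ) (hA : A.IsHermitian) (c t : ℝ)
    (h : ∀ i, (hA.eigenvalues i - c)^2 = t) :
    (A - c • 1) * (A - c • 1) = t • (1 : Matrix (Fin n) (Fin n) ℝ) := by
  set U : Matrix (Fin n) (Fin n) ℝ := (hA.eigenvectorUnitary : Matrix (Fin n) (Fin n) ℝ) with hU
  have h1 : star U * U = 1 := (Matrix.mem_unitaryGroup_iff').mp (hA.eigenvectorUnitary).2
  have h2 : U * star U = 1 := (Matrix.mem_unitaryGroup_iff).mp (hA.eigenvectorUnitary).2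
  have hB : A - c • 1 = U * Matrix.diagonal (fun i => hA.eigenvalues i - c) * star U := by
    conv_lhs => rw [hA.spectral_theorem, Unitary.conjStarAlgAut_apply]
    have hc : (c • (1 : Matrix (Fin n) (Fin n) ℝ)) = U * (c • 1) * star U := by
      rw [Matrix.mul_smul, mul_one, Matrix.smul_mul, h2]
    rw [hc, ← hU, ← Matrix.sub_mul, ← Matrix.mul_sub]
    congr 2
    ext i j
    by_cases hij : i = j <;> simp [Matrix.diagonal, hij, Matrix.one_apply]
  rw [hB]
  have key : (U * Matrix.diagonal (fun i => hA.eigenvalues i - c) * star U) *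
      (U * Matrix.diagonal (fun i => hA.eigenvalues i - c) * star U) =
      U * (Matrix.diagonal (fun i => hA.eigenvalues i - c) *
        Matrix.diagonal (fun i => hA.eigenvalues i - c)) * star U := by
    simp only [mul_assoc]
    rw [← mul_assoc (star U) U, h1, one_mul]
  rw [key, Matrix.diagonal_mul_diagonal]
  have hd : Matrix.diagonal (fun i => (hA.eigenvalues i - c) * (hA.eigenvalues i - c)) =
      t • (1 : Matrix (Fin n) (Fin n) ℝ) := by
    ext i j
    by_cases hij : i = j <;> simp [Matrix.diagonal, hij, Matrix.one_apply, ← sq, h]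
  rw [hd, Matrix.mul_smul, Matrix.smul_mul, mul_one, h2]

theorem selfLoop_energy_upper_bound (n : ℕ) (hn : 0 < n) (G : SimpleGraph (Fin n))
    [DecidableRel G.Adj] (S : Finset (Fin n))
    (hA : (G.adjMatrix ℝ + loopMat n S).IsHermitian) :
    (∑ i, |hA.eigenvalues i - (S.card : ℝ) / n|) ≤
      Real.sqrt ((n : ℝ) * (2 * G.edgeFinset.card + S.card - (S.card : ℝ) ^ 2 / n)) ∧
    ((∑ i, |hA.eigenvalues i - (S.card : ℝ) / n|) =
        Real.sqrt ((n : ℝ) * (2 * G.edgeFinset.card + S.card - (S.card : ℝ) ^ 2 / n)) →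
      (∀ v ∈ S, (G.degree v : ℝ) =
          2 * G.edgeFinset.card / n + 3 * S.card / n - 2 * (S.card : ℝ) ^ 2 / (n : ℝ) ^ 2 - 1) ∧
      (∀ v ∉ S, (G.degree v : ℝ) =
          2 * G.edgeFinset.card / n + S.card / n - 2 * (S.card : ℝ) ^ 2 / (n : ℝ) ^ 2)) := by
  have hn0 : (n : ℝ) ≠ 0 := Nat.cast_ne_zero.mpr hn.ne'
  set A : Matrix (Fin n) (Fin n) ℝ := G.adjMatrix ℝ + loopMat n S with hAdef
  set c : ℝ := (S.card : ℝ) / n with hc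
  set x : Fin n → ℝ := fun i => hA.eigenvalues i - c with hx
  set q : ℝ := ∑ i, (x i)^2 with hq
  set s : ℝ := ∑ i, |x i| with hs
  -- entrywise facts
  have h_entry : ∀ i j, A i j =
      (if G.Adj i j then 1 else 0) + (if i = j ∧ i ∈ S then 1 else 0) := by
    intro i j; simp [hAdef, loopMat]
  have h01 : ∀ i j, A i j = 0 ∨ A i j = 1 := by
    intro i j
    rw [h_entry]
    by_cases h1 : G.Adj i j
    · have h2 : ¬ (i = j ∧ i ∈ S) := fun ⟨hij, _⟩ => G.ne_of_adj h1 hij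
      simp [h1, h2]
    · by_cases h2 : i = j ∧ i ∈ S <;> simp [h1, h2] <;> tauto
  have h_sym : ∀ i j, A j i = A i j := by
    intro i j
    rw [h_entry, h_entry]
    by_cases hij : i = j
    · subst hij; rfl
    · congr 1
      · simp [G.adj_comm]
      · simp [hij, Ne.symm hij]
  have h_diag : ∀ i, A i i = if i ∈ S then 1 else 0 := by
    intro i; rw [h_entry]; simp
  have h_sq : ∀ i j, A i j * A j i = A i j := by
    intro i j
    rw [h_sym i j]
    rcases h01 i j with h | h <;> rw [h] <;> ring
  have h_row : ∀ i, ∑ j, A i j = G.degree i + (if i ∈ S then 1 else 0) := by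
    intro i
    simp only [h_entry, Finset.sum_add_distrib]
    congr 1
    · simp [SimpleGraph.degree, SimpleGraph.neighborFinset_eq_filter, Finset.sum_boole]
    · by_cases hS : i ∈ S <;> simp [hS]
  have h_tr : A.trace = S.card := by
    simp only [Matrix.trace, Matrix.diag, h_entry]
    simp
  have h_tr2 : (A*A).trace = 2 * G.edgeFinset.card + S.card := by
    simp only [Matrix.trace, Matrix.diag, Matrix.mul_apply]
    calc ∑ i, ∑ j, A i j * A j i = ∑ i, ∑ j, A i j := by
          congr 1; ext i; congr 1; ext j; exact h_sq i j
      _ = ∑ i, ((G.degree i : ℝ) + (if i ∈ S then 1 else 0)) := by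
          congr 1; ext i; exact h_row i
      _ = 2 * G.edgeFinset.card + S.card := by
          rw [Finset.sum_add_distrib, ← Nat.cast_sum, G.sum_degrees_eq_twice_card_edges]
          congr 1
          · push_cast; ring
          · simp
  -- the value of q
  have hqval : q = 2 * G.edgeFinset.card + S.card - (S.card : ℝ)^2 / n := by
    have e1 : ∑ i, hA.eigenvalues i = S.card := (aux_trace_eq_sum_eig A hA).symm.trans h_tr
    have e2 : ∑ i, (hA.eigenvalues i)^2 = 2 * G.edgeFinset.card + S.card :=
      (aux_trace_sq_eq A hA).symm.trans h_tr2
    have : q = (∑ i, (hA.eigenvalues i)^2) - 2*c*(∑ i, hA.eigenvalues i) + n * c^2 := by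
      rw [hq]
      simp only [hx, sub_sq, Finset.sum_add_distrib, Finset.sum_sub_distrib,
        Finset.sum_const, Finset.card_univ, Fintype.card_fin, ← Finset.sum_mul,
        ← Finset.mul_sum, nsmul_eq_mul]
      ring
    rw [this, e1, e2, hc]
    field_simp
    ring
  have hqnn : 0 ≤ q := Finset.sum_nonneg fun i _ => sq_nonneg _
  have htarget : (n : ℝ) * (2 * G.edgeFinset.card + S.card - (S.card : ℝ) ^ 2 / n) =
      n * q := by rw [hqval]
  -- Cauchy–Schwarz inequality
  have hcs : s^2 ≤ n * q := by
    have := Finset.sum_mul_sq_le_sq_mul_sq Finset.univ (fun _ => (1:ℝ)) (fun i => |x i|)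
    simpa [hs, hq, sq_abs, Finset.card_univ, mul_comm] using this
  constructor
  · rw [htarget]
    exact Real.le_sqrt_of_sq_le hcs
  -- equality case
  intro heq
  rw [htarget] at heq
  have hnq : 0 ≤ (n:ℝ) * q := mul_nonneg (Nat.cast_nonneg n) hqnn
  have hs2 : s^2 = n * q := by
    rw [heq, Real.sq_sqrt hnq]
  -- all |x i| are equal
  have hzero : ∑ i, ∑ j, (|x i| - |x j|)^2 = 0 := by
    have expand : ∑ i, ∑ j, (|x i| - |x j|)^2 = 2*(n:ℝ)*q - 2*s^2 := by
      have e : ∀ i j : Fin n, (|x i| - |x j|)^2 = (x i)^2 + (x j)^2 - 2 * (|x i| * |x j|) := by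
        intro i j; rw [sub_sq, sq_abs, sq_abs]; ring
      have inner : ∀ i, ∑ j, (|x i| - |x j|)^2 = (n:ℝ) * (x i)^2 + q - 2*s*|x i| := by
        intro i
        have h2 : ∑ j, (2 * (|x i| * |x j|)) = 2*s*|x i| := by
          rw [← Finset.mul_sum, ← Finset.mul_sum, ← hs]; ring
        simp only [e, Finset.sum_sub_distrib, Finset.sum_add_distrib, Finset.sum_const,
          Finset.card_univ, Fintype.card_fin, nsmul_eq_mul, ← hq, h2]
        try ring
      rw [Finset.sum_congr rfl (fun i _ => inner i)]
      have h3 : ∑ i, (2*s*|x i|) = 2*s*s := by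
        rw [← Finset.mul_sum, ← hs]
      simp only [Finset.sum_sub_distrib, Finset.sum_add_distrib, Finset.sum_const,
        Finset.card_univ, Fintype.card_fin, nsmul_eq_mul, ← Finset.mul_sum, ← hq, h3]
      ring
    rw [expand, hs2]; ring
  have habs : ∀ i j : Fin n, |x i| = |x j| := by
    intro i j
    have h1 : ∀ i ∈ Finset.univ (α := Fin n), (0:ℝ) ≤ ∑ j, (|x i| - |x j|)^2 :=
      fun i _ => Finset.sum_nonneg fun j _ => sq_nonneg _
    have h2 := (Finset.sum_eq_zero_iff_of_nonneg h1).mp hzero i (Finset.mem_univ i)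
    have h3 := (Finset.sum_eq_zero_iff_of_nonneg
      (fun j _ => sq_nonneg (|x i| - |x j|))).mp h2 j (Finset.mem_univ j)
    have := pow_eq_zero_iff (n := 2) (by norm_num) |>.mp h3
    linarith [abs_nonneg (x i), abs_nonneg (x j)]
  have hxsq : ∀ i, (x i)^2 = q / n := by
    intro i
    have hqi : q = (n:ℝ) * (x i)^2 := by
      rw [hq, Finset.sum_congr rfl
        (fun j _ => by rw [← sq_abs (x j), ← sq_abs (x i), habs j i] : ∀ j ∈ Finset.univ, (x j)^2 = (x i)^2),
        Finset.sum_const, Finset.card_univ, Fintype.card_fin, nsmul_eq_mul]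
    rw [hqi]
    field_simp
  -- B*B = (q/n) • 1
  have hBB : (A - c • 1) * (A - c • 1) = (q/n) • (1 : Matrix (Fin n) (Fin n) ℝ) :=
    aux_shifted_sq A hA c (q/n) hxsq
  -- diagonal entries of B*B
  have hBvv : ∀ v, ((A - c • 1) * (A - c • 1)) v v =
      (G.degree v : ℝ) + ((if v ∈ S then (1:ℝ) else 0) - c)^2 := by
    intro v
    have hBent : ∀ i j, (A - c • 1) i j = A i j - if i = j then c else 0 := by
      intro i j
      by_cases hij : i = j <;> simp [Matrix.one_apply, hij]
    have hBsym : ∀ j, (A - c • 1) j v = (A - c • 1) v j := by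
      intro j
      rw [hBent, hBent, h_sym]
      by_cases hij : v = j <;> simp [hij, Ne.symm]
      all_goals try (intro h; exact absurd h.symm hij)
    rw [Matrix.mul_apply]
    calc ∑ j, (A - c • 1) v j * (A - c • 1) j v
        = ∑ j, ((A - c • 1) v j)^2 := by
          refine Finset.sum_congr rfl fun j _ => ?_
          rw [hBsym j, sq]
      _ = ∑ j ∈ Finset.univ \ {v}, ((A - c • 1) v j)^2 + ((A - c • 1) v v)^2 := by
          rw [Finset.sum_eq_sum_sdiff_singleton_add (Finset.mem_univ v)]
      _ = (G.degree v : ℝ) + ((if v ∈ S then (1:ℝ) else 0) - c)^2 := by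
          congr 1
          · calc ∑ j ∈ Finset.univ \ {v}, ((A - c • 1) v j)^2
                = ∑ j ∈ Finset.univ \ {v}, A v j := by
                  refine Finset.sum_congr rfl fun j hj => ?_
                  have hjv : v ≠ j := fun h => by simp [h.symm] at hj
                  rw [hBent]
                  simp only [hjv, if_false, sub_zero]
                  rw [sq]
                  nth_rewrite 2 [← h_sym v j]
                  rw [h_sq]
              _ = (∑ j, A v j) - A v v := by
                  rw [Finset.sum_eq_sum_sdiff_singleton_add (Finset.mem_univ v) (A v)]
                  ring
              _ = (G.degree v : ℝ) := by rw [h_row, h_diag]; ring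
          · rw [hBent, h_diag]
            simp
  -- conclude the degrees
  have hdeg : ∀ v, (G.degree v : ℝ) = q/n - ((if v ∈ S then (1:ℝ) else 0) - c)^2 := by
    intro v
    have h1 := hBvv v
    rw [hBB] at h1
    simp only [Matrix.smul_apply, Matrix.one_apply_eq, smul_eq_mul, mul_one] at h1
    linarith
  constructor
  · intro v hv
    have := hdeg v
    rw [if_pos hv] at this
    rw [this, hqval, hc]
    field_simp
    ring
  · intro v hv
    have := hdeg v
    rw [if_neg hv] at this
    rw [this, hqval, hc]
    field_simp
    ring
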